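/- Let Q be an odd prime, a an integer with Q not dividing a² − 1, ε = ((a²−1)/Q) the Legendre symbol, and δ = (2(a+1)/Q). Then in the quadratic extension F_Q[√(a²−1)], the element ω = a + √(a²−1) satisfies ω^((Q−ε)/2) = δ. -/

import Mathlib

open Polynomial

theorem omega_pow_eq_legendreSym (Q : ℕ) [Fact Q.Prime] (hQ : Odd Q) (a : ℤ)
    (ha : ¬ (Q : ℤ) ∣ a ^ 2 - 1) :
    let ε : ℤ := legendreSym Q (a ^ 2 - 1)
    let δ : ℤ := legendreSym Q (2 * (a + 1))
    let f : Polynomial (ZMod Q) := X ^ 2 - C ((a : ZMod Q) ^ 2 - 1)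
    ((a : AdjoinRoot f) + AdjoinRoot.root f) ^ (((Q : ℤ) - ε) / 2).toNat =
      (δ : AdjoinRoot f) := by
  intro ε δ f
  set R := AdjoinRoot f with hR
  obtain ⟨k, hk⟩ := hQ
  have hQ3 : 3 ≤ Q := by
    have := (Fact.out : Q.Prime).two_le
    omega
  -- basic nonvanishing facts in ZMod Q
  have hcast : ∀ z : ℤ, ((z : ZMod Q) = 0 ↔ (Q : ℤ) ∣ z) := fun z =>
    ZMod.intCast_zmod_eq_zero_iff_dvd z Q
  have hc0 : ((a : ZMod Q) ^ 2 - 1 : ZMod Q) ≠ 0 := by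
    intro h
    apply ha
    rw [← hcast]
    push_cast
    exact h
  have ha1 : ((a : ZMod Q) + 1 : ZMod Q) ≠ 0 := by
    intro h
    apply hc0
    have : (a : ZMod Q) = -1 := by linear_combination h
    rw [this]; ring
  have h2 : (2 : ZMod Q) ≠ 0 := by
    have : ((2 : ℤ) : ZMod Q) ≠ 0 := by
      rw [Ne, hcast]
      intro h
      have := Int.le_of_dvd (by norm_num) h
      omega
    simpa using this
  set t : ZMod Q := 2 * ((a : ZMod Q) + 1) with htdef
  have ht : t ≠ 0 := mul_ne_zero h2 ha1
  have hst : t * t⁻¹ = 1 := mul_inv_cancel₀ ht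
  set s : ZMod Q := t⁻¹ with hsdef
  -- nontrivial R, char
  haveI : Nontrivial R := AdjoinRoot.nontrivial f (by
    have : f.degree = 2 := by
      simp only [f]
      compute_degree!
    simp [this])
  haveI : CharP R Q := charP_of_injective_algebraMap (algebraMap (ZMod Q) R).injective Q
  set φ := algebraMap (ZMod Q) R with hφ
  have hφinj : Function.Injective φ := φ.injective
  set A : R := φ (a : ZMod Q) with hA
  set r : R := AdjoinRoot.root f with hr
  have hr2 : r ^ 2 = A ^ 2 - 1 := by
    have h := AdjoinRoot.eval₂_root f
    simp only [f, eval₂_sub, eval₂_pow, eval₂_X, eval₂_C, sub_eq_zero] at h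
    rw [hr, h, hA, hφ]
    push_cast
    rw [map_sub, map_pow, map_one]
    rfl
  have haR : ((a : ℤ) : R) = A := by rw [hA, hφ]; push_cast; rfl
  -- Euler's criterion data
  have hεZ : ((ε : ℤ) : ZMod Q) = ((a : ZMod Q) ^ 2 - 1) ^ (Q / 2) := by
    rw [legendreSym.eq_pow]
    push_cast
    rfl
  have hδZ : ((δ : ℤ) : ZMod Q) = t ^ (Q / 2) := by
    rw [legendreSym.eq_pow]
    push_cast
    rfl
  have hδsq : (δ : ℤ) * δ = 1 := by
    have : ((2 * (a + 1) : ℤ) : ZMod Q) ≠ 0 := by push_cast; exact ht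
    have := legendreSym.sq_one (p := Q) this
    nlinarith [this]
  have hδinv : ((δ : ℤ) : ZMod Q)⁻¹ = ((δ : ℤ) : ZMod Q) := by
    apply inv_eq_of_mul_eq_one_right
    rw [← Int.cast_mul, hδsq, Int.cast_one]
  have hk2 : Q / 2 = k := by omega
  -- Frobenius computations
  have hAQ : A ^ Q = A := by rw [hA, ← map_pow, ZMod.pow_card]
  have hrQ : r ^ Q = φ ((ε : ℤ) : ZMod Q) * r := by
    have h1 : r ^ Q = (r ^ 2) ^ k * r := by
      have h0 : r ^ Q = r ^ (2 * k + 1) := congrArg (fun n => r ^ n) hk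
      rw [h0, pow_succ, pow_mul]
    rw [h1, hr2, hεZ, hk2]
    congr 1
    rw [map_pow, map_sub, map_pow, map_one]
  -- ω and u
  set ω : R := A + r with hω
  set u : R := A + 1 + r with hu
  have hωunit : IsUnit ω := by
    apply IsUnit.of_mul_eq_one (a := ω) (A - r)
    rw [hω]
    have hA2 : A ^ 2 - r ^ 2 = 1 := by rw [hr2]; ring
    linear_combination hA2
  have hu2 : u ^ 2 = φ t * ω := by
    have hφt : φ t = 2 * (A + 1) := by
      rw [htdef, map_mul, map_add, map_one, map_ofNat, hA]
    rw [hφt, hu, hω]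
    linear_combination hr2
  have huunit : IsUnit u := by
    have h1 : IsUnit (φ t) := (RingHom.isUnit_map φ (Ne.isUnit ht))
    have : IsUnit (u ^ 2) := by rw [hu2]; exact h1.mul hωunit
    exact (isUnit_pow_iff two_ne_zero).mp this
  have huQ : u ^ Q = A + 1 + φ ((ε : ℤ) : ZMod Q) * r := by
    have h1 : (A + 1 + r) ^ Q = (A + 1) ^ Q + r ^ Q := add_pow_char _ _ Q
    have h2 : (A + 1 : R) ^ Q = A ^ Q + 1 ^ Q := add_pow_char _ _ Q
    rw [hu, h1, h2, hAQ, one_pow, hrQ]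
  -- ω = φ s * u ^ 2
  have hωs : ω = φ s * u ^ 2 := by
    rw [hu2, ← mul_assoc, ← map_mul, hsdef, mul_comm t⁻¹ t, hst, map_one, one_mul]
  have hsk : φ (s ^ k) = ((δ : ℤ) : R) := by
    have : s ^ k = ((δ : ℤ) : ZMod Q) := by
      rw [hsdef, inv_pow, ← hk2, ← hδZ, hδinv]
    rw [this, hφ, map_intCast]
  -- case split on ε
  have hε1 : ε = 1 ∨ ε = -1 := by
    apply legendreSym.eq_one_or_neg_one
    push_cast
    exact hc0
  rcases hε1 with hε | hε
  · -- ε = 1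
    have hn : (((Q : ℤ) - ε) / 2).toNat = k := by rw [hε]; omega
    rw [hn, haR]
    have huQ' : u ^ Q = u := by
      rw [huQ, hε]
      simp [hu]
    have hu2k : u ^ (2 * k) = 1 := by
      have : u ^ (2 * k) * u = 1 * u := by
        rw [one_mul, ← pow_succ]
        have : 2 * k + 1 = Q := by omega
        rw [this, huQ']
      exact huunit.mul_right_cancel this
    calc ω ^ k = φ (s ^ k) * u ^ (2 * k) := by
          rw [hωs, mul_pow, ← pow_mul, map_pow, mul_comm 2 k]
      _ = ((δ : ℤ) : R) := by rw [hu2k, mul_one, hsk]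
  · -- ε = -1
    have hn : (((Q : ℤ) - ε) / 2).toNat = k + 1 := by rw [hε]; omega
    rw [hn, haR]
    have huQ' : u ^ Q = A + 1 - r := by
      rw [huQ, hε]
      push_cast
      rw [map_neg, map_one]
      ring
    have hu2k : u ^ (2 * (k + 1)) = φ t := by
      have hQ1 : 2 * (k + 1) = Q + 1 := by omega
      rw [hQ1, pow_succ, huQ', hu]
      have hφt : φ t = 2 * (A + 1) := by
        rw [htdef, map_mul, map_add, map_one, map_ofNat, hA]
      rw [hφt]
      linear_combination (-1 : R) * hr2
    calc ω ^ (k + 1) = φ (s ^ (k + 1)) * u ^ (2 * (k + 1)) := by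
          rw [hωs, mul_pow, ← pow_mul, map_pow, mul_comm 2 (k + 1)]
      _ = φ (s ^ (k + 1)) * φ t := by rw [hu2k]
      _ = φ (s ^ (k + 1) * t) := (map_mul φ _ _).symm
      _ = φ (s ^ k) := by
          rw [show s ^ (k + 1) * t = s ^ k * (t * s) by ring, hst, mul_one]
      _ = ((δ : ℤ) : R) := hsk
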